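/- Let D₀ be a self-adjoint operator with Re-part inequality D₀² ≥ Nδ − C where δ ≥ 0 is a bounded self-adjoint operator and N, C > 0, and let B be a bounded self-adjoint operator. Set D = D₀ + iB. If ψ is a vector with δψ ≥ ψ (i.e., ⟨ψ, δψ⟩ ≥ ‖ψ‖²) and N > C + ‖B‖², then Re⟨ψ, D²ψ⟩ ≥ (N − C − ‖B‖²)‖ψ‖² > 0; in particular ψ ∉ ker D. -/

import Mathlib

/-- Vanishing estimate: let `D₀` be self-adjoint with `D₀² ≥ Nδ − C` for a bounded
positive operator `δ`, `B` bounded self-adjoint, and `D = D₀ + iB`. If `⟨ψ, δψ⟩ ≥ ‖ψ‖²`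
and `N > C + ‖B‖²`, then `Re⟨ψ, D²ψ⟩ ≥ (N − C − ‖B‖²)‖ψ‖² > 0`; in particular
`ψ ∉ ker D` when `ψ ≠ 0`. -/
theorem positive_degree_not_in_kernel
    {H : Type*} [NormedAddCommGroup H] [InnerProductSpace ℂ H] [CompleteSpace H]
    (D₀ B δ : H →L[ℂ] H)
    (hD₀ : IsSelfAdjoint D₀) (hB : IsSelfAdjoint B) (hδ : IsSelfAdjoint δ)
    (N C : ℝ) (hCpos : 0 < C) (hNpos : 0 < N)
    -- `δ ≥ 0`
    (hδpos : ∀ φ : H, 0 ≤ (inner ℂ (δ φ) φ : ℂ).re)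
    -- `D₀² ≥ Nδ − C`
    (hWeitzenbock : ∀ φ : H,
      N * (inner ℂ (δ φ) φ : ℂ).re - C * ‖φ‖ ^ 2 ≤ (inner ℂ (D₀ φ) (D₀ φ) : ℂ).re)
    (hN : C + ‖B‖ ^ 2 < N)
    (ψ : H)
    -- `δψ ≥ ψ`, i.e. `⟨ψ, δψ⟩ ≥ ‖ψ‖²`
    (hψ : ‖ψ‖ ^ 2 ≤ (inner ℂ (δ ψ) ψ : ℂ).re) :
    (N - C - ‖B‖ ^ 2) * ‖ψ‖ ^ 2 ≤
      (inner ℂ (((D₀ + Complex.I • B) * (D₀ + Complex.I • B)) ψ) ψ : ℂ).re ∧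
    (ψ ≠ 0 → (D₀ + Complex.I • B) ψ ≠ 0) := by
  have hD₀s := ContinuousLinearMap.isSelfAdjoint_iff_isSymmetric.mp hD₀
  have hBs := ContinuousLinearMap.isSelfAdjoint_iff_isSymmetric.mp hB
  -- expand the square
  have hexp : (((D₀ + Complex.I • B) * (D₀ + Complex.I • B)) ψ)
      = D₀ (D₀ ψ) + Complex.I • D₀ (B ψ) + Complex.I • B (D₀ ψ)
        - B (B ψ) := by
    simp [ContinuousLinearMap.mul_apply, smul_smul, Complex.I_mul_I]
    module
  have key : (inner ℂ (((D₀ + Complex.I • B) * (D₀ + Complex.I • B)) ψ) ψ : ℂ).re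
      = (inner ℂ (D₀ ψ) (D₀ ψ) : ℂ).re - (inner ℂ (B ψ) (B ψ) : ℂ).re := by
    rw [hexp]
    have h1 : (inner ℂ (D₀ (D₀ ψ)) ψ : ℂ) = inner ℂ (D₀ ψ) (D₀ ψ) := hD₀s _ _
    have h2 : (inner ℂ (B (B ψ)) ψ : ℂ) = inner ℂ (B ψ) (B ψ) := hBs _ _
    have h3 : (inner ℂ (D₀ (B ψ)) ψ : ℂ) = inner ℂ (B ψ) (D₀ ψ) := hD₀s _ _
    have h4 : (inner ℂ (B (D₀ ψ)) ψ : ℂ) = inner ℂ (D₀ ψ) (B ψ) := hBs _ _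
    have h5 : (inner ℂ (D₀ ψ) (B ψ) : ℂ) = starRingEnd ℂ (inner ℂ (B ψ) (D₀ ψ)) :=
      (inner_conj_symm _ _).symm
    have him : (inner ℂ (D₀ ψ) (B ψ) : ℂ).im = -(inner ℂ (B ψ) (D₀ ψ) : ℂ).im := by
      rw [h5, Complex.conj_im]
    rw [inner_sub_left, inner_add_left, inner_add_left, inner_smul_left,
      inner_smul_left, h1, h2, h3, h4]
    simp [Complex.add_re, Complex.sub_re, Complex.mul_re, Complex.conj_re, Complex.conj_im]
    linarith
  have hBnorm : (inner ℂ (B ψ) (B ψ) : ℂ).re ≤ ‖B‖ ^ 2 * ‖ψ‖ ^ 2 := by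
    rw [show (inner ℂ (B ψ) (B ψ) : ℂ) = (‖B ψ‖ : ℂ) ^ 2 from inner_self_eq_norm_sq_to_K _]
    simp only [← Complex.ofReal_pow, Complex.ofReal_re]
    have := B.le_opNorm ψ
    calc ‖B ψ‖ ^ 2 ≤ (‖B‖ * ‖ψ‖) ^ 2 := pow_le_pow_left₀ (norm_nonneg _) this 2
      _ = ‖B‖ ^ 2 * ‖ψ‖ ^ 2 := by ring
  have hmain : (N - C - ‖B‖ ^ 2) * ‖ψ‖ ^ 2 ≤
      (inner ℂ (((D₀ + Complex.I • B) * (D₀ + Complex.I • B)) ψ) ψ : ℂ).re := by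
    rw [key]
    have hW := hWeitzenbock ψ
    nlinarith [hδpos ψ]
  refine ⟨hmain, fun hψ0 hker => ?_⟩
  have hz : (((D₀ + Complex.I • B) * (D₀ + Complex.I • B)) ψ) = 0 := by
    rw [ContinuousLinearMap.mul_apply, hker, map_zero]
  rw [hz] at hmain
  simp only [inner_zero_left, Complex.zero_re] at hmain
  have : 0 < (N - C - ‖B‖ ^ 2) * ‖ψ‖ ^ 2 := by
    have h2 : (0:ℝ) < ‖ψ‖ ^ 2 := pow_pos (norm_pos_iff.mpr hψ0) 2
    nlinarith
  linarith
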